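/- With Ψ¹(ω) = [∏_{n=1}^N (1 − i σ_v² ω_n / β)^{−M}] · ∏_{m=1}^M (1 − z_m(ω))^{−1} and Ψ̂¹(ω) = [∏_{n=1}^N (1 − i σ_v² ω_n / β)^{−M}] · exp(∑_{m=1}^M z_m(ω)), for every even natural number M ≥ 4 one has ∫_{ℝ^N} |Ψ¹(ω) − Ψ̂¹(ω)| dω ≤ 2M · ( π β (M − 3)!! / (σ_v² (M − 2)!!) )^N, where n!! denotes the double factorial. -/

import Mathlib

open MeasureTheory Finset Nat Real Set

lemma prodOddDF (n : ℕ) : (∏ i ∈ Finset.range (n+1), (2*(i:ℝ)+1)) = ((2*n+1)‼ : ℝ) := by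
  induction n with
  | zero => simp
  | succ n ih =>
    have h2 : (2*(n+1)+1)‼ = (2*n+1+2) * (2*n+1)‼ := by
      rw [show 2*(n+1)+1 = 2*n+1+2 from by ring, Nat.doubleFactorial_add_two]
    rw [Finset.prod_range_succ, ih, h2]
    push_cast; ring

lemma prodEvenDF (n : ℕ) : (∏ i ∈ Finset.range (n+1), (2*(i:ℝ)+2)) = ((2*n+2)‼ : ℝ) := by
  induction n with
  | zero => simp
  | succ n ih =>
    have h2 : (2*(n+1)+2)‼ = (2*n+2+2) * (2*n+2)‼ := by
      rw [show 2*(n+1)+2 = 2*n+2+2 from by ring, Nat.doubleFactorial_add_two]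
    rw [Finset.prod_range_succ, ih, h2]
    push_cast; ring

lemma oneDimAux (m : ℕ) (c : ℝ) (hc : 0 < c) :
    Integrable (fun x : ℝ => ((1 + (c*x)^2)^(m+1))⁻¹) ∧
    ∫ x : ℝ, ((1 + (c*x)^2)^(m+1))⁻¹ =
      (π/c) * ∏ i ∈ Finset.range m, (2*(i:ℝ)+1)/(2*i+2) := by
  set g : ℝ → ℝ := fun x => ((1 + (c*x)^2)^(m+1))⁻¹ with hg
  set s : Set ℝ := Set.Ioo (-(π/2)) (π/2) with hsdef
  have hs : MeasurableSet s := measurableSet_Ioo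
  set f : ℝ → ℝ := fun θ => tan θ / c with hfdef
  set f' : ℝ → ℝ := fun θ => 1/(cos θ^2) / c with hf'def
  have hf' : ∀ θ ∈ s, HasDerivWithinAt f (f' θ) s θ := fun θ hθ =>
    ((Real.hasDerivAt_tan (ne_of_gt (Real.cos_pos_of_mem_Ioo hθ))).div_const c).hasDerivWithinAt
  have hinj : Set.InjOn f s := fun a ha b hb hab => by
    apply Real.injOn_tan ha hb
    have : tan a / c = tan b / c := hab
    field_simp at this; exact this
  have himg : f '' s = Set.univ := by
    have h1 : f = (fun x => x / c) ∘ tan := rfl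
    rw [h1, Set.image_comp, Real.image_tan_Ioo, Set.image_univ]
    have hsurj : Function.Surjective (fun x : ℝ => x / c) := fun y =>
      ⟨y * c, by field_simp⟩
    exact hsurj.range_eq
  set F : ℝ → ℝ := fun θ => cos θ ^ (2*m) / c with hFdef
  have hEq : Set.EqOn (fun θ => |f' θ| • g (f θ)) F s := by
    intro θ hθ
    have hcos : 0 < cos θ := Real.cos_pos_of_mem_Ioo hθ
    have h1 : 1 + tan θ^2 = 1/cos θ^2 := by
      rw [Real.tan_eq_sin_div_cos, div_pow, ← Real.sin_sq_add_cos_sq θ]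
      field_simp
      linear_combination (cos θ ^ 2) * Real.sin_sq_add_cos_sq θ
    have h2 : c * (tan θ / c) = tan θ := mul_div_cancel₀ _ hc.ne'
    simp only [smul_eq_mul, hg, hfdef, hf'def, hFdef, h2, h1]
    rw [abs_of_pos (by positivity), one_div, inv_pow, inv_inv]
    field_simp
    ring
  have hFc : Continuous F := (Real.continuous_cos.pow _).div_const c
  have hFint : IntegrableOn F s := hFc.integrableOn_Icc.mono_set Set.Ioo_subset_Icc_self
  have hsubint : IntegrableOn (fun θ => |f' θ| • g (f θ)) s :=
    hFint.congr_fun (fun θ hθ => (hEq hθ).symm) hs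
  have hgint : Integrable g := by
    rw [← integrableOn_univ, ← himg,
      integrableOn_image_iff_integrableOn_abs_deriv_smul hs hf' hinj]
    exact hsubint
  refine ⟨hgint, ?_⟩
  have hshift : ∫ θ in (-(π/2))..(π/2), cos θ^(2*m) = ∫ x in (0:ℝ)..π, sin x ^ (2*m) := by
    have h3 := intervalIntegral.integral_comp_add_right (a := -(π/2)) (b := π/2)
      (fun x => sin x ^ (2*m)) (π/2)
    simp only [Real.sin_add_pi_div_two] at h3
    rw [h3]; norm_num
  calc ∫ x : ℝ, g x = ∫ x in f '' s, g x := by rw [himg, setIntegral_univ]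
    _ = ∫ θ in s, |f' θ| • g (f θ) := integral_image_eq_integral_abs_deriv_smul hs hf' hinj g
    _ = ∫ θ in s, F θ := setIntegral_congr_fun hs hEq
    _ = ∫ θ in Set.Ioc (-(π/2)) (π/2), F θ := (integral_Ioc_eq_integral_Ioo).symm
    _ = ∫ θ in (-(π/2))..(π/2), F θ := (intervalIntegral.integral_of_le (by linarith [pi_pos])).symm
    _ = (∫ θ in (-(π/2))..(π/2), cos θ^(2*m)) / c := by
        simp only [hFdef]; exact intervalIntegral.integral_div _ _
    _ = (π/c) * ∏ i ∈ Finset.range m, (2*(i:ℝ)+1)/(2*i+2) := by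
        rw [hshift, integral_sin_pow_even]; ring

lemma aux_im (u t : ℝ) (h : 0 ≤ u * t) :
    0 ≤ (((u:ℝ) : ℂ) / (((1:ℝ):ℂ) + ((-t:ℝ):ℂ) * Complex.I)).im := by
  rw [Complex.div_im, Complex.normSq_add_mul_I]
  simp
  rw [neg_div, neg_nonpos]
  exact div_nonneg h (by positivity)

lemma aux_re (a : ℝ) (ha : 0 ≤ a) (S : ℂ) (hS : 0 ≤ S.im) :
    (Complex.I * (a:ℂ) * S).re ≤ 0 := by
  simp [Complex.mul_re, Complex.mul_im]
  positivity

lemma pointwiseBound (M N : ℕ) (A : Fin N → ℂ) (q : Fin N → ℝ)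
    (hq : ∀ n, Norm.norm (A n) ^ M = q n) (hqpos : ∀ n, 0 < q n)
    (z : Fin M → ℂ) (hz : ∀ m, (z m).re ≤ 0) :
    Norm.norm ((∏ n, (A n)^M)⁻¹ * ∏ m, (1 - z m)⁻¹
      - (∏ n, (A n)^M)⁻¹ * Complex.exp (∑ m, z m)) ≤ 2 * ∏ n, (q n)⁻¹ := by
  have habsX : Norm.norm (∏ m, (1 - z m)⁻¹) ≤ 1 := by
    rw [norm_prod]
    apply Finset.prod_le_one (fun m _ => norm_nonneg _)
    intro m _
    rw [norm_inv]
    apply inv_le_one_of_one_le₀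
    have h1 : (1:ℝ) ≤ (1 - z m).re := by
      rw [Complex.sub_re, Complex.one_re]; linarith [hz m]
    exact h1.trans (Complex.re_le_norm _)
  have habsY : Norm.norm (Complex.exp (∑ m, z m)) ≤ 1 := by
    rw [Complex.norm_exp]
    have h1 : (∑ m, z m).re ≤ 0 := by
      rw [Complex.re_sum]; exact Finset.sum_nonpos (fun m _ => hz m)
    calc Real.exp (∑ m, z m).re ≤ Real.exp 0 := Real.exp_le_exp.mpr h1
      _ = 1 := Real.exp_zero
  have hdiff : Norm.norm ((∏ m, (1 - z m)⁻¹) - Complex.exp (∑ m, z m)) ≤ 2 := by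
    calc Norm.norm ((∏ m, (1 - z m)⁻¹) - Complex.exp (∑ m, z m))
        ≤ Norm.norm (∏ m, (1 - z m)⁻¹) + Norm.norm (Complex.exp (∑ m, z m)) := by
          exact norm_sub_le _ _
      _ ≤ 2 := by linarith
  have hPinv : (Norm.norm (∏ n, (A n)^M))⁻¹ = ∏ n, (q n)⁻¹ := by
    rw [norm_prod, ← Finset.prod_inv_distrib]
    exact Finset.prod_congr rfl fun n _ => by rw [norm_pow, hq n]
  rw [← mul_sub, norm_mul, norm_inv, hPinv]
  have hprodnn : 0 ≤ ∏ n, (q n)⁻¹ := Finset.prod_nonneg fun n _ => by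
    have := hqpos n; positivity
  calc (∏ n, (q n)⁻¹) * Norm.norm ((∏ m, (1 - z m)⁻¹) - Complex.exp (∑ m, z m))
      ≤ (∏ n, (q n)⁻¹) * 2 := mul_le_mul_of_nonneg_left hdiff hprodnn
    _ = 2 * ∏ n, (q n)⁻¹ := by ring

open MeasureTheory Finset Nat Real in
/-- With `Ψ¹, Ψ̂¹` as in the paper and even `M ≥ 4`,
`∫_{ℝ^N} |Ψ¹(ω) - Ψ̂¹(ω)| dω ≤ 2M (π β (M-3)!! / (σ_v² (M-2)!!))^N`. -/
theorem integral_abs_CF_sub_le_doubleFactorial (M N : ℕ) (hM4 : 4 ≤ M) (hMe : Even M)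
    (hN : 1 ≤ N) (β σv : ℝ) (hβ : 0 < β) (hσv : 0 < σv)
    (lam : Fin M → ℝ) (hlam : ∀ m, 0 ≤ lam m) (h : Fin N → ℂ) :
    (∫ ω : Fin N → ℝ, Norm.norm (
        ((∏ n, (1 - Complex.I * (σv : ℂ) ^ 2 * (ω n : ℂ) / (β : ℂ)) ^ M)⁻¹ *
          ∏ m, (1 - (Complex.I * (lam m : ℂ) / (β : ℂ)) *
            ∑ n, (‖h n‖ : ℂ) ^ 2 * (ω n : ℂ) /
              (1 - Complex.I * (σv : ℂ) ^ 2 * (ω n : ℂ) / (β : ℂ)))⁻¹)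
        - ((∏ n, (1 - Complex.I * (σv : ℂ) ^ 2 * (ω n : ℂ) / (β : ℂ)) ^ M)⁻¹ *
          Complex.exp (∑ m, (Complex.I * (lam m : ℂ) / (β : ℂ)) *
            ∑ n, (‖h n‖ : ℂ) ^ 2 * (ω n : ℂ) /
              (1 - Complex.I * (σv : ℂ) ^ 2 * (ω n : ℂ) / (β : ℂ))))))
      ≤ 2 * M * (π * β * ((M - 3)‼ : ℝ) / (σv ^ 2 * ((M - 2)‼ : ℝ))) ^ N := by
  obtain ⟨r, hr⟩ := hMe
  obtain ⟨j, hj⟩ : ∃ j : ℕ, M = 2*j+4 := ⟨r - 2, by omega⟩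
  have hc : (0:ℝ) < σv^2/β := by positivity
  set c : ℝ := σv^2/β with hcdef
  set g : ℝ → ℝ := fun x => ((1 + (c*x)^2)^(j+1+1))⁻¹ with hgdef
  obtain ⟨hgint, hgval⟩ := oneDimAux (j+1) c hc
  have hX₀pos : (0:ℝ) < π * β * ((M - 3)‼ : ℝ) / (σv ^ 2 * ((M - 2)‼ : ℝ)) := by
    have h1 : (0:ℝ) < ((M-3)‼ : ℝ) := by exact_mod_cast Nat.doubleFactorial_pos _
    have h2 : (0:ℝ) < ((M-2)‼ : ℝ) := by exact_mod_cast Nat.doubleFactorial_pos _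
    positivity
  have hgval' : ∫ x : ℝ, g x = π * β * ((M - 3)‼ : ℝ) / (σv ^ 2 * ((M - 2)‼ : ℝ)) := by
    rw [hgval]
    have hsplit : (∏ i ∈ Finset.range (j+1), (2*(i:ℝ)+1)/(2*i+2))
        = ((2*j+1)‼ : ℝ) / ((2*j+2)‼ : ℝ) := by
      rw [Finset.prod_div_distrib, prodOddDF j, prodEvenDF j]
    rw [hsplit, show M - 3 = 2*j+1 from by omega, show M - 2 = 2*j+2 from by omega, hcdef]
    have h2 : (0:ℝ) < ((2*j+2)‼ : ℝ) := by exact_mod_cast Nat.doubleFactorial_pos _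
    field_simp
  -- pointwise bound
  have hpt : ∀ ω : Fin N → ℝ, Norm.norm (
        ((∏ n, (1 - Complex.I * (σv : ℂ) ^ 2 * (ω n : ℂ) / (β : ℂ)) ^ M)⁻¹ *
          ∏ m, (1 - (Complex.I * (lam m : ℂ) / (β : ℂ)) *
            ∑ n, (‖h n‖ : ℂ) ^ 2 * (ω n : ℂ) /
              (1 - Complex.I * (σv : ℂ) ^ 2 * (ω n : ℂ) / (β : ℂ)))⁻¹)
        - ((∏ n, (1 - Complex.I * (σv : ℂ) ^ 2 * (ω n : ℂ) / (β : ℂ)) ^ M)⁻¹ *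
          Complex.exp (∑ m, (Complex.I * (lam m : ℂ) / (β : ℂ)) *
            ∑ n, (‖h n‖ : ℂ) ^ 2 * (ω n : ℂ) /
              (1 - Complex.I * (σv : ℂ) ^ 2 * (ω n : ℂ) / (β : ℂ)))))
      ≤ 2 * ∏ n, g (ω n) := by
    intro ω
    have hAeq : ∀ n, (1 - Complex.I * (σv : ℂ) ^ 2 * (ω n : ℂ) / (β : ℂ))
        = ((1:ℝ):ℂ) + ((-(c * ω n) : ℝ):ℂ) * Complex.I := by
      intro n; rw [hcdef]; push_cast; field_simp; ring
    have hAabs : ∀ n, Norm.norm (1 - Complex.I * (σv : ℂ) ^ 2 * (ω n : ℂ) / (β : ℂ)) ^ M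
        = (1 + (c * ω n)^2)^(j+2) := by
      intro n
      rw [hj, show 2*j+4 = 2*(j+2) from by ring, pow_mul, Complex.sq_norm, hAeq n,
        Complex.normSq_add_mul_I]
      norm_num
    have hSim : 0 ≤ (∑ n, (‖h n‖ : ℂ) ^ 2 * (ω n : ℂ) /
        (1 - Complex.I * (σv : ℂ) ^ 2 * (ω n : ℂ) / (β : ℂ))).im := by
      rw [Complex.im_sum]
      apply Finset.sum_nonneg
      intro n _
      have hnum : ((‖h n‖ : ℂ))^2 * ((ω n : ℝ):ℂ)
          = ((‖h n‖^2 * ω n : ℝ) : ℂ) := by push_cast; ring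
      rw [hnum, hAeq n]
      apply aux_im
      rw [show ‖h n‖^2 * ω n * (c * ω n)
          = c * (‖h n‖)^2 * (ω n)^2 from by ring]
      positivity
    have hzre : ∀ m : Fin M, ((Complex.I * (lam m : ℂ) / (β : ℂ)) *
        ∑ n, (‖h n‖ : ℂ) ^ 2 * (ω n : ℂ) /
          (1 - Complex.I * (σv : ℂ) ^ 2 * (ω n : ℂ) / (β : ℂ))).re ≤ 0 := by
      intro m
      rw [show (Complex.I * (lam m : ℂ) / (β : ℂ)) *
          (∑ n, (‖h n‖ : ℂ) ^ 2 * (ω n : ℂ) /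
            (1 - Complex.I * (σv : ℂ) ^ 2 * (ω n : ℂ) / (β : ℂ)))
        = Complex.I * ((lam m / β : ℝ):ℂ) *
          (∑ n, (‖h n‖ : ℂ) ^ 2 * (ω n : ℂ) /
            (1 - Complex.I * (σv : ℂ) ^ 2 * (ω n : ℂ) / (β : ℂ))) from by push_cast; ring]
      exact aux_re _ (div_nonneg (hlam m) hβ.le) _ hSim
    exact pointwiseBound M N _ (fun n => (1 + (c * ω n)^2)^(j+2)) hAabs
      (fun n => by positivity) _ hzre
  have hBint : Integrable (fun ω : Fin N → ℝ => 2 * ∏ n, g (ω n)) :=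
    (Integrable.fintype_prod (f := fun _ : Fin N => g) (fun _ => hgint)).const_mul 2
  calc (∫ ω : Fin N → ℝ, Norm.norm (_))
      ≤ ∫ ω : Fin N → ℝ, 2 * ∏ n, g (ω n) :=
        integral_mono_of_nonneg (Filter.Eventually.of_forall fun ω => norm_nonneg _)
          hBint (Filter.Eventually.of_forall hpt)
    _ = 2 * (∫ x : ℝ, g x) ^ N := by
        rw [integral_const_mul, volume_pi, integral_fintype_prod_eq_pow (ι := Fin N) g, Fintype.card_fin]
    _ = 2 * (π * β * ((M - 3)‼ : ℝ) / (σv ^ 2 * ((M - 2)‼ : ℝ))) ^ N := by rw [hgval']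
    _ ≤ 2 * M * (π * β * ((M - 3)‼ : ℝ) / (σv ^ 2 * ((M - 2)‼ : ℝ))) ^ N := by
        have h4 : (4:ℝ) ≤ M := by exact_mod_cast hM4
        have hp : (0:ℝ) ≤ (π * β * ((M - 3)‼ : ℝ) / (σv ^ 2 * ((M - 2)‼ : ℝ))) ^ N :=
          pow_nonneg hX₀pos.le N
        nlinarith
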